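/- There exist a sequence (α_n)_{n≥2} of pairwise distinct nonzero complex numbers in the open unit disc Δ(0,1) and a sequence (r_n)_{n≥2} of positive real numbers such that: the closed discs cl Δ(α_n, r_n) = {z ∈ ℂ : |z − α_n| ≤ r_n} are pairwise disjoint, each cl Δ(α_n, r_n) is contained in the open unit disc Δ(0,1), and the Lebesgue (area) measure of the set cl Δ(0,1) \ ⋃_{n=2}^∞ cl Δ(α_n, r_n) is zero. -/

import Mathlib

open Metric MeasureTheory Set

/-- (Wolff) There are pairwise disjoint closed discs, with distinct nonzero centres lying in
the open unit disc of `ℂ`, contained in the open unit disc, whose union fills the closed unit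
disc up to a set of Lebesgue area measure zero. -/
theorem exists_disjoint_closed_discs_filling_unit_disc :
    ∃ (α : ℕ → ℂ) (r : ℕ → ℝ),
      Function.Injective α ∧ (∀ n, α n ≠ 0) ∧ (∀ n, ‖α n‖ < 1) ∧
      (∀ n, 0 < r n) ∧
      (∀ m n, m ≠ n → Disjoint (closedBall (α m) (r m)) (closedBall (α n) (r n))) ∧
      (∀ n, closedBall (α n) (r n) ⊆ ball (0 : ℂ) 1) ∧
      volume (closedBall (0 : ℂ) 1 \ ⋃ n, closedBall (α n) (r n)) = 0 := by
  classical
  set s : Set ℂ := ball (0 : ℂ) 1 \ {0} with hs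
  obtain ⟨t, r, t_count, ts, hr, μt, t_disj⟩ :=
    Besicovitch.exists_disjoint_closedBall_covering_ae (volume : Measure ℂ)
      (fun _ => Ioi 0) s
      (fun x _ δ hδ => ⟨δ/2, ⟨Set.mem_Ioi.2 (half_pos hδ), half_pos hδ, half_lt_self hδ⟩⟩)
      (fun x => 1 - ‖x‖)
      (fun x hx => by
        have : ‖x‖ < 1 := by simpa using hx.1
        show (0:ℝ) < 1 - ‖x‖
        linarith)
  -- every chosen ball is inside the open unit ball
  have hsub : ∀ x ∈ t, closedBall x (r x) ⊆ ball (0 : ℂ) 1 := by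
    intro x hx z hz
    have h1 : ‖x‖ < 1 := by simpa using (ts hx).1
    have h2 : r x < 1 - ‖x‖ := (hr x hx).2.2
    simp only [mem_closedBall, dist_eq_norm] at hz
    simp only [mem_ball, dist_eq_norm, sub_zero]
    calc ‖z‖ = ‖z - x + x‖ := by ring_nf
      _ ≤ ‖z - x‖ + ‖x‖ := norm_add_le _ _
      _ < 1 := by linarith
  -- t is infinite
  have t_inf : t.Infinite := by
    intro t_fin
    set K : Set ℂ := ⋃ x ∈ t, closedBall x (r x) with hK
    have Kclosed : IsClosed K := by
      apply t_fin.isClosed_biUnion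
      intro x _
      exact isClosed_closedBall
    have hopen : IsOpen (ball (0 : ℂ) 1 \ (K ∪ {0})) :=
      isOpen_ball.sdiff (Kclosed.union isClosed_singleton)
    have hempty : ball (0 : ℂ) 1 \ (K ∪ {0}) = ∅ := by
      by_contra h
      have hpos : 0 < volume (ball (0 : ℂ) 1 \ (K ∪ {0})) :=
        hopen.measure_pos volume (Set.nonempty_iff_ne_empty.2 h)
      have hsub' : ball (0 : ℂ) 1 \ (K ∪ {0}) ⊆ s \ K := by
        intro z hz
        exact ⟨⟨hz.1, fun h0 => hz.2 (Or.inr h0)⟩, fun hk => hz.2 (Or.inl hk)⟩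
      have := measure_mono_null hsub' μt
      rw [this] at hpos
      exact lt_irrefl _ hpos
    have hball : ball (0 : ℂ) 1 ⊆ K ∪ {0} := by
      intro z hz
      by_contra hzk
      exact (Set.eq_empty_iff_forall_notMem.1 hempty z) ⟨hz, hzk⟩
    have hKball : K ∪ {0} ⊆ ball (0 : ℂ) 1 := by
      apply Set.union_subset
      · exact Set.iUnion₂_subset hsub
      · simp
    have heq : ball (0 : ℂ) 1 = K ∪ {0} := Set.Subset.antisymm hball hKball
    -- then ball is closed, so equals univ by connectedness; contradiction
    have hclosed : IsClosed (ball (0 : ℂ) 1) := heq ▸ Kclosed.union isClosed_singleton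
    have : (ball (0 : ℂ) 1) = Set.univ := by
      have := isClopen_iff.1 ⟨hclosed, isOpen_ball⟩
      rcases this with h | h
      · exact absurd h (Set.nonempty_iff_ne_empty.1 (nonempty_ball.2 one_pos))
      · exact h
    have : (2 : ℂ) ∈ ball (0 : ℂ) 1 := this ▸ Set.mem_univ _
    simp at this
  -- enumerate t
  have : Countable t := t_count.to_subtype
  have : Infinite t := t_inf.to_subtype
  obtain ⟨d⟩ : Nonempty (Denumerable t) := nonempty_denumerable_iff.2 ⟨‹_›, ‹_›⟩
  let e : ℕ ≃ t := (Denumerable.eqv t).symm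
  refine ⟨fun n => (e n : ℂ), fun n => r (e n), ?_, ?_, ?_, ?_, ?_, ?_, ?_⟩
  · intro m n h
    exact e.injective (Subtype.ext h)
  · intro n
    exact (ts (e n).2).2
  · intro n
    simpa using (ts (e n).2).1
  · intro n
    exact (hr _ (e n).2).2.1
  · intro m n hmn
    exact t_disj (e m).2 (e n).2 (fun h => hmn (e.injective (Subtype.ext h)))
  · intro n
    exact hsub _ (e n).2
  · -- measure statement
    have hUnion : (⋃ n, closedBall ((e n : ℂ)) (r (e n))) = ⋃ x ∈ t, closedBall x (r x) := by
      apply Set.Subset.antisymm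
      · exact Set.iUnion_subset fun n => Set.subset_biUnion_of_mem (u := fun x => closedBall x (r x)) (e n).2
      · intro z hz
        simp only [Set.mem_iUnion] at hz ⊢
        obtain ⟨x, hx, hz⟩ := hz
        exact ⟨e.symm ⟨x, hx⟩, by simpa using hz⟩
    rw [hUnion]
    have hsplit : closedBall (0 : ℂ) 1 \ (⋃ x ∈ t, closedBall x (r x)) ⊆
        (s \ ⋃ x ∈ t, closedBall x (r x)) ∪ (sphere (0 : ℂ) 1 ∪ {0}) := by
      intro z hz
      rcases eq_or_ne z 0 with h0 | h0
      · exact Or.inr (Or.inr h0)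
      rcases lt_or_eq_of_le (mem_closedBall.1 hz.1) with h1 | h1
      · exact Or.inl ⟨⟨mem_ball.2 h1, h0⟩, hz.2⟩
      · exact Or.inr (Or.inl h1)
    refine measure_mono_null hsplit ?_
    refine measure_union_null μt (measure_union_null ?_ ?_)
    · exact Measure.addHaar_sphere volume 0 1
    · exact measure_singleton 0
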